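/- Let q ≥ 2 and 1 ≤ t ≤ n, and let D be a subset of (ℤ/qℤ)^n. Then ∑_{x∈D} χ_y(x) = 0 for every y ∈ (ℤ/qℤ)^n with 1 ≤ |y| ≤ t if and only if D is an orthogonal array with parameters (t,n,q): for every t-element set I of coordinates, the function sending a ∈ (ℤ/qℤ)^I to the number of x ∈ D whose restriction to I equals a is constant. -/
import Mathlib


open Finset Matrix

section Helpers
set_option linter.unusedSectionVars false
variable (q : ℕ) [NeZero q] (ω : ℂ) (hω : IsPrimitiveRoot ω q)
include hω

lemma oa_pow_val_mod (k : ℕ) : ω ^ (k % q) = ω ^ k := by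
  conv_rhs => rw [← Nat.mod_add_div k q, pow_add, pow_mul, hω.pow_eq_one, one_pow, mul_one]

lemma oa_e_add (a b : ZMod q) : ω ^ (a + b).val = ω ^ a.val * ω ^ b.val := by
  rw [ZMod.val_add, oa_pow_val_mod q ω hω, pow_add]

lemma oa_e_sum {ι : Type*} (s : Finset ι) (f : ι → ZMod q) :
    ω ^ (∑ i ∈ s, f i).val = ∏ i ∈ s, ω ^ (f i).val := by
  induction s using Finset.cons_induction with
  | empty => simp [ZMod.val_zero]
  | cons i s hi ih => rw [Finset.sum_cons, oa_e_add q ω hω, ih, Finset.prod_cons]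

lemma oa_sum_char (z : ZMod q) :
    ∑ c : ZMod q, ω ^ (c * z).val = if z = 0 then (q : ℂ) else 0 := by
  split_ifs with h
  · subst h; simp [ZMod.val_zero, ZMod.card]
  · have h1 : ∀ c : ZMod q, ω ^ (c * z).val = (ω ^ z.val) ^ c.val := by
      intro c
      rw [ZMod.val_mul, oa_pow_val_mod q ω hω, ← pow_mul, mul_comm]
    simp_rw [h1]
    have hζ1 : ω ^ z.val ≠ 1 := by
      intro hc
      have hd := (hω.pow_eq_one_iff_dvd z.val).mp hc
      have h0 := Nat.eq_zero_of_dvd_of_lt hd (ZMod.val_lt z)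
      exact h (by rwa [ZMod.val_eq_zero] at h0)
    have hbij : ∑ c : ZMod q, (ω ^ z.val) ^ c.val = ∑ i ∈ Finset.range q, (ω ^ z.val) ^ i := by
      apply Finset.sum_nbij (fun c => c.val)
      · intro c _; exact Finset.mem_range.mpr (ZMod.val_lt c)
      · intro c _ c' _ hcc; exact ZMod.val_injective q hcc
      · intro i hi
        exact ⟨(i : ZMod q), Finset.mem_univ _, ZMod.val_cast_of_lt (Finset.mem_range.mp hi)⟩
      · intro c _; rfl
    rw [hbij, geom_sum_eq hζ1, ← pow_mul, mul_comm, pow_mul, hω.pow_eq_one, one_pow]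
    simp

lemma oa_sum_pi {ι : Type*} [Fintype ι] [DecidableEq ι] (z : ι → ZMod q) :
    ∑ c : ι → ZMod q, ∏ i, ω ^ ((c i) * z i).val =
      if (∀ i, z i = 0) then (q : ℂ) ^ (Fintype.card ι) else 0 := by
  rw [← Fintype.prod_sum (fun (i : ι) (c : ZMod q) => ω ^ (c * z i).val)]
  simp_rw [oa_sum_char q ω hω]
  split_ifs with h
  · rw [Finset.prod_congr rfl (fun i _ => if_pos (h i)), Finset.prod_const, Finset.card_univ]
  · push_neg at h
    obtain ⟨i, hi⟩ := h
    exact Finset.prod_eq_zero (Finset.mem_univ i) (if_neg hi)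

end Helpers

/-- A subset `D ⊆ (ℤ/qℤ)^n` satisfies `∑_{x∈D} χ_y(x) = 0` for every `y` with
`1 ≤ |y| ≤ t` (i.e. is a `Φ_{[t]}`-design of the Hamming graph `H(n,q)`) if and only if
`D` is an orthogonal array with parameters `(t,n,q)`: for every `t`-element set `I` of
coordinates, the number of elements of `D` restricting to a given pattern on `I` is
the same for all patterns. -/
theorem design_iff_orthogonal_array
    (q n t : ℕ) [NeZero q] (hq : 2 ≤ q) (ht1 : 1 ≤ t) (htn : t ≤ n)
    (ω : ℂ) (hω : IsPrimitiveRoot ω q) (D : Finset (Fin n → ZMod q)) :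
    (∀ y : Fin n → ZMod q, 1 ≤ hammingNorm y → hammingNorm y ≤ t →
        ∑ x ∈ D, ω ^ (∑ i, y i * x i).val = 0) ↔
      (∀ I : Finset (Fin n), I.card = t →
        ∀ a b : Fin n → ZMod q,
          (D.filter fun x => ∀ i ∈ I, x i = a i).card =
            (D.filter fun x => ∀ i ∈ I, x i = b i).card) := by
  have hqC : (q : ℂ) ≠ 0 := Nat.cast_ne_zero.mpr (by omega)
  constructor
  · -- design → orthogonal array
    intro hdes I hI a b
    have hcardI : Fintype.card ↥I = t := by rw [Fintype.card_coe, hI]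
    have key : ∀ a : Fin n → ZMod q,
        ((D.filter fun x => ∀ i ∈ I, x i = a i).card : ℂ) * (q : ℂ) ^ t = (D.card : ℂ) := by
      intro a
      have step1 : ((D.filter fun x => ∀ i ∈ I, x i = a i).card : ℂ) * (q : ℂ) ^ t
          = ∑ x ∈ D, (if ∀ i ∈ I, x i = a i then ((q : ℂ) ^ t) else 0) := by
        rw [Finset.sum_ite, Finset.sum_const, Finset.sum_const_zero, add_zero,
          nsmul_eq_mul]
      rw [step1]
      have step2 : ∀ x : Fin n → ZMod q,
          (if ∀ i ∈ I, x i = a i then ((q : ℂ) ^ t) else 0)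
            = ∑ c : ↥I → ZMod q, ∏ i : ↥I, ω ^ ((c i) * (x i - a i)).val := by
        intro x
        rw [oa_sum_pi q ω hω, hcardI]
        congr 1
        simp only [eq_iff_iff]
        constructor
        · intro h i; rw [h i i.2, sub_self]
        · intro h i hi
          have := h ⟨i, hi⟩
          rwa [sub_eq_zero] at this
      simp_rw [step2]
      rw [Finset.sum_comm]
      have step3 : ∀ c : ↥I → ZMod q, ∀ x : Fin n → ZMod q,
          ∏ i : ↥I, ω ^ ((c i) * (x i - a i)).val
            = ω ^ (∑ i, (fun j => if h : j ∈ I then c ⟨j, h⟩ else 0) i * x i).val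
              * ω ^ ((- ∑ i : ↥I, c i * a i).val) := by
        intro c x
        rw [← oa_e_sum q ω hω]
        rw [← oa_e_add q ω hω]
        congr 1
        have hsum : ∑ i : ↥I, c i * (x ↑i - a ↑i)
            = (∑ i : ↥I, c i * x ↑i) + (- ∑ i : ↥I, c i * a ↑i) := by
          rw [← Finset.sum_neg_distrib, ← Finset.sum_add_distrib]
          exact Finset.sum_congr rfl fun i _ => by ring
        rw [hsum]
        congr 2
        have hext : ∑ i, (fun j => if h : j ∈ I then c ⟨j, h⟩ else 0) i * x i
            = ∑ i ∈ I, (fun j => if h : j ∈ I then c ⟨j, h⟩ else 0) i * x i := by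
          symm
          apply Finset.sum_subset I.subset_univ
          intro j _ hj
          simp [dif_neg hj]
        rw [hext, ← Finset.sum_coe_sort I (fun j => (if h : j ∈ I then c ⟨j, h⟩ else 0) * x j)]
        exact Finset.sum_congr rfl fun i _ => by rw [dif_pos i.2]
      have step4 : ∀ c : ↥I → ZMod q,
          (∑ x ∈ D, ∏ i : ↥I, ω ^ ((c i) * (x i - a i)).val)
            = (if c = 0 then (D.card : ℂ) else 0) := by
        intro c
        split_ifs with hc
        · subst hc
          have : ∀ x ∈ D, ∏ i : ↥I, ω ^ (((0 : ↥I → ZMod q) i) * (x i - a i)).val = 1 := by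
            intro x _
            simp [ZMod.val_zero]
          rw [Finset.sum_congr rfl this, Finset.sum_const, nsmul_eq_mul, mul_one]
        · simp_rw [step3 c]
          rw [← Finset.sum_mul]
          set y : Fin n → ZMod q := fun j => if h : j ∈ I then c ⟨j, h⟩ else 0 with hy
          have hsupp : ({j | y j ≠ 0} : Finset (Fin n)) ⊆ I := by
            intro j hj
            simp only [mem_filter, Finset.mem_univ, true_and] at hj
            by_contra hjI
            exact hj (by simp [hy, dif_neg hjI])
          have hnorm_le : hammingNorm y ≤ t := by
            rw [← hI]
            exact Finset.card_le_card hsupp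
          have hnorm_ge : 1 ≤ hammingNorm y := by
            obtain ⟨i, hi⟩ := Function.ne_iff.mp hc
            have hyi : y ↑i ≠ 0 := by
              simpa [hy, dif_pos i.2] using hi
            have : (i : Fin n) ∈ ({j | y j ≠ 0} : Finset (Fin n)) := by
              simp [hyi]
            exact Finset.card_pos.mpr ⟨_, this⟩ 
          rw [hdes y hnorm_ge hnorm_le, zero_mul]
      rw [Finset.sum_congr rfl fun c _ => step4 c, Finset.sum_ite_eq' Finset.univ 0
        (fun _ => (D.card : ℂ)), if_pos (Finset.mem_univ _)]
    have := (key a).trans (key b).symm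
    have hqt : (q : ℂ) ^ t ≠ 0 := pow_ne_zero _ hqC
    have := mul_right_cancel₀ hqt this
    exact_mod_cast this
  · -- orthogonal array → design
    intro hOA y hy1 hyt
    have hSle : ({i | y i ≠ 0} : Finset (Fin n)).card ≤ t := hyt
    obtain ⟨I, hSI, hIcard⟩ := Finset.exists_superset_card_eq hSle (by simpa using htn)
    have hcardI : Fintype.card ↥I = t := by rw [Fintype.card_coe, hIcard]
    rw [← Finset.sum_fiberwise D (fun x => (fun i : ↥I => x ↑i))
      (fun x => ω ^ (∑ i, y i * x i).val)]
    have houter : ∀ c : ↥I → ZMod q,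
        (∑ x ∈ D.filter (fun x => (fun i : ↥I => x ↑i) = c), ω ^ (∑ i, y i * x i).val)
          = ((D.filter fun x => ∀ i ∈ I, x i = 0).card : ℂ)
            * ∏ i : ↥I, ω ^ ((c i) * y ↑i).val := by
      intro c
      have hval : ∀ x ∈ D.filter (fun x => (fun i : ↥I => x ↑i) = c),
          ω ^ (∑ i, y i * x i).val = ∏ i : ↥I, ω ^ ((c i) * y ↑i).val := by
        intro x hx
        rw [Finset.mem_filter] at hx
        have hxc : ∀ i : ↥I, x ↑i = c i := fun i => congrFun hx.2 i
        have h1 : ∑ i, y i * x i = ∑ i ∈ I, y i * x i := by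
          symm
          apply Finset.sum_subset I.subset_univ
          intro j _ hj
          have : y j = 0 := by
            by_contra hyj
            exact hj (hSI (by simp [hyj]))
          rw [this, zero_mul]
        rw [h1, ← Finset.sum_coe_sort I (fun j => y j * x j)]
        rw [Finset.sum_congr rfl fun i _ => by rw [hxc i, mul_comm]]
        exact oa_e_sum q ω hω Finset.univ (fun i : ↥I => c i * y ↑i)
      rw [Finset.sum_congr rfl hval, Finset.sum_const, nsmul_eq_mul]
      congr 2
      have hfe : D.filter (fun x => (fun i : ↥I => x ↑i) = c)
          = D.filter (fun x => ∀ i ∈ I, x i = (fun j => if h : j ∈ I then c ⟨j, h⟩ else 0) i) := by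
        apply Finset.filter_congr
        intro x _
        simp only [funext_iff]
        constructor
        · intro h i hi; rw [h ⟨i, hi⟩, dif_pos hi]
        · intro h i; rw [h ↑i i.2, dif_pos i.2]
      rw [hfe, hOA I hIcard _ 0]
      simp
    rw [Finset.sum_congr rfl fun c _ => houter c, ← Finset.mul_sum]
    rw [oa_sum_pi q ω hω (fun i : ↥I => y ↑i)]
    have : ¬ (∀ i : ↥I, y ↑i = 0) := by
      obtain ⟨i, hi⟩ := Finset.card_pos.mp (hy1 : 0 < ({i | y i ≠ 0} : Finset (Fin n)).card)
      simp only [mem_filter, Finset.mem_univ, true_and] at hi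
      intro h
      exact hi (h ⟨i, hSI (by simp [hi])⟩)
    rw [if_neg this, mul_zero]
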